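/- Matrices obtained from the blowup Construction (B^(ℓ) = [C^(ℓ) D^(ℓ) E^(ℓ)]) using a Strongly Order-Regular building block B with an odd number of rows M are Order-Regular, with m_ℓ = M^ℓ rows and n_ℓ = ℓ·N + 2(ℓ-1) columns. -/

import Mathlib

/-- Successor row index, saturating at the last row (convention `A[m+1] = A[m]`). -/
def rowSucc {m : ℕ} (i : Fin m) : Fin m :=
  if h : i.1 + 1 < m then ⟨i.1 + 1, h⟩ else i

/-- The matrix `A` satisfies the Order-Regularity constraint for the pair of rows `(i, j)`:
there is a column `k` with `A[i,k] ≠ A[i+1,k] = A[j,k] = A[j+1,k]`. -/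
def SatCon {m n : ℕ} (A : Fin m → Fin n → Bool) (i j : Fin m) : Prop :=
  ∃ k : Fin n, A i k ≠ A (rowSucc i) k ∧ A (rowSucc i) k = A j k ∧ A j k = A (rowSucc j) k

/-- Order-Regularity: every pair of rows `i < j` satisfies the constraint, and the last two
rows are distinct. -/
def OrderRegular {m n : ℕ} (A : Fin m → Fin n → Bool) : Prop :=
  (∀ i j : Fin m, i < j → SatCon A i j) ∧
  ∀ _h : 2 ≤ m, A ⟨m - 2, by omega⟩ ≠ A ⟨m - 1, by omega⟩

def SORcond2 {m n : ℕ} (A : Fin m → Fin n → Bool) : Prop :=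
  ∀ i j : Fin m, i.1 + 1 < j.1 → ∃ k : Fin n,
    A i k ≠ A (rowSucc i) k ∧ A (rowSucc i) k ≠ A j k ∧ A j k = A (rowSucc j) k

def StronglyOrderRegular {m n : ℕ} (A : Fin m → Fin n → Bool) : Prop :=
  OrderRegular A ∧ SORcond2 A

/-- The blowup construction `B^(ℓ) = [C^(ℓ) D^(ℓ) E^(ℓ)]` built from an `M × N` building
block `Bb`.  Entry in row `i`, column `k` (0-indexed) of `B^(ℓ)`, which has `M^ℓ` rows and
`ℓ·N + 2(ℓ-1)` columns. -/
def blowup (Bb : ℕ → ℕ → Bool) (M N : ℕ) : ℕ → ℕ → ℕ → Bool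
  | 0, _, _ => false
  | 1, i, k => Bb i k
  | ℓ + 2, i, k =>
    let g := blowup Bb M N (ℓ + 1)
    let ml := M ^ (ℓ + 1)              -- number of rows of the previous iterate
    let nl := (ℓ + 1) * N + 2 * ℓ      -- number of columns of the previous iterate
    let s := i / ml                    -- slice index
    let r := i % ml                    -- index within the slice
    if k < nl then
      -- the C block: M-gluing of the previous iterate
      if s % 2 = 0 then g r k
      else if g 0 k = g (ml - 1) k then g r k else !(g r k)
    else if k < nl + N then
      -- the D block: alternating pattern of B[s,k'] and B[s+1,k'] (with B[M+1] = B[M])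
      let k' := k - nl
      if r % 2 = 0 then Bb s k' else Bb (min (s + 1) (M - 1)) k'
    else if k = nl + N then
      -- first column of the E block
      if s % 2 = 0 then decide (r % 2 = 1) else false
    else
      -- second column of the E block
      if s % 2 = 0 then false else decide (r % 2 = 1)

/-! ### Auxiliary material -/

/-- ℕ-level version of `SatCon`. -/
def SatConN (m n : ℕ) (f : ℕ → ℕ → Bool) (i j : ℕ) : Prop :=
  ∃ k, k < n ∧ f i k ≠ f (min (i+1) (m-1)) k ∧
    f (min (i+1) (m-1)) k = f j k ∧ f j k = f (min (j+1) (m-1)) k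

lemma rowSucc_val {m : ℕ} (i : Fin m) : (rowSucc i).1 = min (i.1+1) (m-1) := by
  have := i.2
  unfold rowSucc
  split
  · show i.1 + 1 = min (i.1+1) (m-1)
    omega
  · show i.1 = min (i.1+1) (m-1)
    omega

lemma satConN_iff {m n : ℕ} (f : ℕ → ℕ → Bool) (i j : Fin m) :
    SatCon (fun (a : Fin m) (b : Fin n) => f a.1 b.1) i j ↔ SatConN m n f i.1 j.1 := by
  unfold SatCon SatConN
  constructor
  · rintro ⟨k, h⟩
    exact ⟨k.1, k.2, by simpa [rowSucc_val] using h⟩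
  · rintro ⟨k, hk, h⟩
    exact ⟨⟨k, hk⟩, by simpa [rowSucc_val] using h⟩

lemma orderRegular_iff {m n : ℕ} (f : ℕ → ℕ → Bool) :
    OrderRegular (fun (a : Fin m) (b : Fin n) => f a.1 b.1) ↔
      ((∀ i j : ℕ, i < j → j < m → SatConN m n f i j) ∧
       (2 ≤ m → ∃ k, k < n ∧ f (m-2) k ≠ f (m-1) k)) := by
  unfold OrderRegular
  constructor
  · rintro ⟨h1, h2⟩
    constructor
    · intro i j hij hjm
      exact (satConN_iff f ⟨i, by omega⟩ ⟨j, hjm⟩).1 (h1 _ _ (Fin.mk_lt_mk.mpr hij))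
    · intro h2m
      have := h2 h2m
      rw [Function.ne_iff] at this
      obtain ⟨k, hk⟩ := this
      exact ⟨k.1, k.2, hk⟩
  · rintro ⟨h1, h2⟩
    constructor
    · intro i j hij
      exact (satConN_iff f i j).2 (h1 i.1 j.1 hij j.2)
    · intro hm
      obtain ⟨k, hk, hne⟩ := h2 hm
      rw [Function.ne_iff]
      exact ⟨⟨k, hk⟩, hne⟩

lemma bool_trans (a b c : Bool) : a ≠ b → b ≠ c → a = c := by revert a b c; decide

lemma xor_inj (a b c : Bool) : (Bool.xor a c = Bool.xor b c) ↔ a = b := by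
  revert a b c; decide

/-! ### Division/modulo helpers -/

lemma dm_of {m : ℕ} (s r : ℕ) (h0 : 0 < m) (hr : r < m) :
    (m*s+r)/m = s ∧ (m*s+r)%m = r :=
  ⟨by rw [Nat.mul_add_div h0, Nat.div_eq_of_lt hr]; omega,
   by rw [Nat.mul_add_mod, Nat.mod_eq_of_lt hr]⟩

lemma succ_dm1 {m i : ℕ} (h0 : 0 < m) (h : i % m + 1 < m) :
    (i+1) / m = i / m ∧ (i+1) % m = i % m + 1 := by
  have h1 := Nat.div_add_mod i m
  rw [show i+1 = m * (i/m) + (i%m+1) by omega]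
  exact ⟨by rw [Nat.mul_add_div h0, Nat.div_eq_of_lt h]; omega,
         by rw [Nat.mul_add_mod, Nat.mod_eq_of_lt h]⟩

lemma succ_dm2 {m i : ℕ} (h0 : 0 < m) (h : i % m + 1 = m) :
    (i+1) / m = i / m + 1 ∧ (i+1) % m = 0 := by
  have h1 := Nat.div_add_mod i m
  have ee : m * (i/m+1) = m * (i/m) + m := by ring
  rw [show i+1 = m * (i/m+1) + 0 by omega]
  exact ⟨by rw [Nat.mul_add_div h0, Nat.zero_div], by rw [Nat.mul_add_mod, Nat.zero_mod]⟩


lemma slice_succ_lt {M m i : ℕ} (hm0 : 0 < m) (h1 : i % m + 1 = m) (h2 : i + 1 < M * m) :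
    i / m + 1 < M := by
  have hd := Nat.div_add_mod i m
  have e3 : m * (i/m+1) = m * (i/m) + m := by ring
  have e5 : m * M = M * m := Nat.mul_comm m M
  by_contra hc
  push_neg at hc
  have e4 : m * M ≤ m * (i/m+1) := Nat.mul_le_mul_left m hc
  omega

/-! ### The step matrix -/

def stepA (M N m nl : ℕ) (Bb g : ℕ → ℕ → Bool) (i k : ℕ) : Bool :=
  if k < nl then
    if (i / m) % 2 = 0 then g (i % m) k
    else if g 0 k = g (m - 1) k then g (i % m) k else !(g (i % m) k)
  else if k < nl + N then
    if (i % m) % 2 = 0 then Bb (i / m) (k - nl) else Bb (min (i / m + 1) (M - 1)) (k - nl)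
  else if k = nl + N then
    if (i / m) % 2 = 0 then decide (i % m % 2 = 1) else false
  else
    if (i / m) % 2 = 0 then false else decide (i % m % 2 = 1)

def cval (g : ℕ → ℕ → Bool) (m s k : ℕ) : Bool :=
  decide (s % 2 = 1) && (g 0 k != g (m-1) k)

section Step

variable {M N m nl : ℕ} {Bb g : ℕ → ℕ → Bool}

lemma stepA_C {k : ℕ} (hk : k < nl) (i : ℕ) :
    stepA M N m nl Bb g i k = Bool.xor (g (i % m) k) (cval g m (i / m) k) := by
  unfold stepA cval
  rw [if_pos hk]
  rcases Nat.mod_two_eq_zero_or_one (i/m) with h | h <;> rw [h] <;>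
    cases h0 : g 0 k <;> cases h1 : g (m-1) k <;> cases h2 : g (i % m) k <;>
      simp [h0, h1, h2]

lemma glue (g : ℕ → ℕ → Bool) (m s k : ℕ) :
    Bool.xor (g (m-1) k) (cval g m s k) = Bool.xor (g 0 k) (cval g m (s+1) k) := by
  unfold cval
  rcases Nat.mod_two_eq_zero_or_one s with h | h
  · have h' : (s+1) % 2 = 1 := by omega
    rw [h, h']
    cases h0 : g 0 k <;> cases h1 : g (m-1) k <;> simp [h0, h1]
  · have h' : (s+1) % 2 = 0 := by omega
    rw [h, h']
    cases h0 : g 0 k <;> cases h1 : g (m-1) k <;> simp [h0, h1]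

lemma stepA_D {k : ℕ} (hk1 : nl ≤ k) (hk2 : k < nl + N) (i : ℕ) :
    stepA M N m nl Bb g i k =
      if (i % m) % 2 = 0 then Bb (i / m) (k - nl) else Bb (min (i / m + 1) (M - 1)) (k - nl) := by
  unfold stepA
  rw [if_neg (by omega), if_pos hk2]

lemma E_val {p : ℕ} (hp : p < 2) (row : ℕ) :
    stepA M N m nl Bb g row (nl+N+p) =
      if (row/m) % 2 = p then decide (row % m % 2 = 1) else false := by
  interval_cases p
  · unfold stepA
    rw [if_neg (by omega), if_neg (by omega), if_pos (by omega)]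
  · unfold stepA
    rw [if_neg (by omega), if_neg (by omega), if_neg (by omega)]
    rcases Nat.mod_two_eq_zero_or_one (row/m) with h | h <;> rw [h] <;> norm_num

lemma D_row_val {k' : ℕ} (hk' : k' < N) (hm0 : 0 < m) (j : ℕ) :
    stepA M N m nl Bb g j (nl+k') =
      if j % m % 2 = 0 then Bb (j/m) k' else Bb (min (j/m+1) (M-1)) k' := by
  have hC : nl + k' - nl = k' := by omega
  rw [stepA_D (by omega) (by omega), hC]

lemma D_succ_val (hm0 : 0 < m) (hmodd : m % 2 = 1) {k' : ℕ} (hk' : k' < N) {i : ℕ}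
    (hi1 : i + 1 < M * m) :
    stepA M N m nl Bb g (i+1) (nl+k') =
      if i % m % 2 = 0 then Bb (min (i/m+1) (M-1)) k' else Bb (i/m) k' := by
  have hd := Nat.div_add_mod i m
  have hrm : i % m < m := Nat.mod_lt _ hm0
  rcases Nat.lt_or_ge (i % m + 1) m with hin | hbd
  · obtain ⟨e1, e2⟩ := succ_dm1 hm0 hin
    rw [D_row_val hk' hm0, e1, e2]
    rcases Nat.mod_two_eq_zero_or_one (i % m) with h | h
    · rw [if_neg (by omega), if_pos h]
    · rw [if_pos (by omega), if_neg (by omega)]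
  · have hq : i % m + 1 = m := by omega
    obtain ⟨e1, e2⟩ := succ_dm2 hm0 hq
    rw [D_row_val hk' hm0, e1, e2]
    have hiM : i/m + 1 < M := slice_succ_lt hm0 hq hi1
    have hpar : i % m % 2 = 0 := by omega
    rw [if_pos (by omega), if_pos hpar, show min (i/m+1) (M-1) = i/m+1 by omega]

lemma D_pair (hm0 : 0 < m) {k' j : ℕ} (hk' : k' < N) (hj : j < M*m)
    (b3 : Bb (j/m) k' = Bb (min (j/m+1) (M-1)) k') :
    stepA M N m nl Bb g j (nl+k') = Bb (j/m) k' ∧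
    stepA M N m nl Bb g (min (j+1) (M*m-1)) (nl+k') = Bb (j/m) k' := by
  have hrm : j % m < m := Nat.mod_lt _ hm0
  have first : stepA M N m nl Bb g j (nl+k') = Bb (j/m) k' := by
    rw [D_row_val hk' hm0]
    rcases Nat.mod_two_eq_zero_or_one (j % m) with h | h
    · rw [if_pos h]
    · rw [if_neg (by omega)]
      exact b3.symm
  refine ⟨first, ?_⟩
  rcases Nat.lt_or_ge (j+1) (M*m) with hj1 | hlast
  · rw [show min (j+1) (M*m-1) = j+1 by omega]
    rcases Nat.lt_or_ge (j % m + 1) m with hin | hbd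
    · obtain ⟨e1, e2⟩ := succ_dm1 hm0 hin
      rw [D_row_val hk' hm0, e1, e2]
      rcases Nat.mod_two_eq_zero_or_one (j % m + 1) with h | h
      · rw [if_pos h]
      · rw [if_neg (by omega)]
        exact b3.symm
    · have hq : j % m + 1 = m := by omega
      obtain ⟨e1, e2⟩ := succ_dm2 hm0 hq
      rw [D_row_val hk' hm0, e1, e2]
      have hjM : j/m + 1 < M := slice_succ_lt hm0 hq hj1
      rw [if_pos (by omega)]
      rw [show min (j/m+1) (M-1) = j/m+1 by omega] at b3
      exact b3.symm
  · rw [show min (j+1) (M*m-1) = j by omega]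
    exact first

lemma E_pair (hm0 : 0 < m) {p j : ℕ} (hp : p < 2)
    (hpj : (j/m) % 2 ≠ p) (hj : j < M*m) :
    stepA M N m nl Bb g j (nl+N+p) = false ∧
    stepA M N m nl Bb g (min (j+1) (M*m-1)) (nl+N+p) = false := by
  have first : stepA M N m nl Bb g j (nl+N+p) = false := by
    rw [E_val hp, if_neg hpj]
  refine ⟨first, ?_⟩
  rcases Nat.lt_or_ge (j+1) (M*m) with hj1 | hlast
  · rw [show min (j+1) (M*m-1) = j+1 by omega, E_val hp]
    have hrm : j % m < m := Nat.mod_lt _ hm0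
    rcases Nat.lt_or_ge (j % m + 1) m with hin | hbd
    · obtain ⟨e1, e2⟩ := succ_dm1 hm0 hin
      rw [e1, if_neg hpj]
    · have hq : j % m + 1 = m := by omega
      obtain ⟨e1, e2⟩ := succ_dm2 hm0 hq
      rw [e1, e2]
      split <;> simp
  · rw [show min (j+1) (M*m-1) = j by omega]
    exact first

lemma step_pair (hm0 : 0 < m) (hmodd : m % 2 = 1)
    (H1 : ∀ s t, s < t → t < M → ∃ k, k < N ∧ Bb s k ≠ Bb (min (s+1) (M-1)) k ∧
          Bb (min (s+1) (M-1)) k = Bb t k ∧ Bb t k = Bb (min (t+1) (M-1)) k)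
    (H2 : ∀ s t, s + 1 < t → t < M → ∃ k, k < N ∧ Bb s k ≠ Bb (min (s+1) (M-1)) k ∧
          Bb (min (s+1) (M-1)) k ≠ Bb t k ∧ Bb t k = Bb (min (t+1) (M-1)) k)
    (IH : ∀ i j, i < j → j < m → SatConN m nl g i j) :
    ∀ i j, i < j → j < M*m → SatConN (M*m) (nl+N+2) (stepA M N m nl Bb g) i j := by
  intro i j hij hjm
  have him : i < M*m := by omega
  have hsi : i/m < M := (Nat.div_lt_iff_lt_mul hm0).2 him
  have hsj : j/m < M := (Nat.div_lt_iff_lt_mul hm0).2 hjm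
  have hri : i % m < m := Nat.mod_lt _ hm0
  have hrj : j % m < m := Nat.mod_lt _ hm0
  have hdi := Nat.div_add_mod i m
  have hdj := Nat.div_add_mod j m
  have hsle : i/m ≤ j/m := Nat.div_le_div_right (le_of_lt hij)
  unfold SatConN
  rw [show min (i+1) (M*m-1) = i+1 by omega]
  rcases eq_or_lt_of_le hsle with hseq | hslt
  · -- same slice
    have hrij : i % m < j % m := by rw [hseq] at hdi; omega
    obtain ⟨k, hk, h1, h2, h3⟩ := IH (i % m) (j % m) hrij hrj
    rw [show min (i % m+1) (m-1) = i % m+1 by omega] at h1 h2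
    obtain ⟨e1, e2⟩ := succ_dm1 hm0 (show i % m + 1 < m by omega)
    have vi : stepA M N m nl Bb g i k = Bool.xor (g (i % m) k) (cval g m (j/m) k) := by
      rw [stepA_C hk, hseq]
    have vi1 : stepA M N m nl Bb g (i+1) k
        = Bool.xor (g (i % m + 1) k) (cval g m (j/m) k) := by
      rw [stepA_C hk, e1, e2, hseq]
    have vj : stepA M N m nl Bb g j k = Bool.xor (g (j % m) k) (cval g m (j/m) k) :=
      stepA_C hk j
    refine ⟨k, by omega, ?_, ?_, ?_⟩
    · rw [vi, vi1]
      exact fun hh => h1 ((xor_inj _ _ _).1 hh)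
    · rw [vi1, vj, h2]
    · rcases Nat.lt_or_ge (j % m + 1) m with hin | hbd
      · rw [show min (j % m+1) (m-1) = j % m+1 by omega] at h3
        rcases Nat.lt_or_ge (j+1) (M*m) with hj1 | hl
        · obtain ⟨f1, f2⟩ := succ_dm1 hm0 hin
          rw [show min (j+1) (M*m-1) = j+1 by omega, vj, stepA_C hk (j+1), f1, f2, h3]
        · rw [show min (j+1) (M*m-1) = j by omega]
      · have hq : j % m + 1 = m := by omega
        rcases Nat.lt_or_ge (j+1) (M*m) with hj1 | hl
        · obtain ⟨f1, f2⟩ := succ_dm2 hm0 hq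
          rw [show min (j+1) (M*m-1) = j+1 by omega, vj, stepA_C hk (j+1), f1, f2,
            show j % m = m-1 by omega]
          exact glue g m (j/m) k
        · rw [show min (j+1) (M*m-1) = j by omega]
  · -- different slices
    rcases Nat.mod_two_eq_zero_or_one (i % m) with hpar | hpar
    · -- row within slice is even: use H1 and the D block
      obtain ⟨k', hk', b1, b2, b3⟩ := H1 (i/m) (j/m) hslt hsj
      rw [show min (i/m+1) (M-1) = i/m+1 by omega] at b1 b2
      obtain ⟨pj1, pj2⟩ := D_pair hm0 hk' hjm b3
      refine ⟨nl+k', by omega, ?_, ?_, ?_⟩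
      · rw [D_row_val hk' hm0, if_pos hpar, D_succ_val hm0 hmodd hk' (by omega), if_pos hpar,
          show min (i/m+1) (M-1) = i/m+1 by omega]
        exact b1
      · rw [D_succ_val hm0 hmodd hk' (by omega), if_pos hpar,
          show min (i/m+1) (M-1) = i/m+1 by omega, pj1]
        exact b2
      · rw [pj1, pj2]
    · rcases eq_or_lt_of_le (show i/m+1 ≤ j/m from hslt) with hadj | hfar
      · -- adjacent slices: use the E block
        have hp2 : (i/m) % 2 < 2 := Nat.mod_lt _ (by norm_num)
        have hpj : (j/m) % 2 ≠ (i/m) % 2 := by omega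
        obtain ⟨pj1, pj2⟩ := E_pair hm0 hp2 hpj hjm
        have hin : i % m + 1 < m := by omega
        obtain ⟨e1, e2⟩ := succ_dm1 hm0 hin
        refine ⟨nl+N+(i/m) % 2, by omega, ?_, ?_, ?_⟩
        · rw [E_val hp2, E_val hp2, e1, e2, if_pos rfl, if_pos rfl, hpar,
            show (i % m+1) % 2 = 0 by omega]
          simp
        · rw [E_val hp2, e1, e2, if_pos rfl, pj1, show (i % m+1) % 2 = 0 by omega]
          simp
        · rw [pj1, pj2]
      · -- far slices: use H2 and the D block
        obtain ⟨k', hk', b1, b2, b3⟩ := H2 (i/m) (j/m) hfar hsj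
        rw [show min (i/m+1) (M-1) = i/m+1 by omega] at b1 b2
        have hbij : Bb (i/m) k' = Bb (j/m) k' := bool_trans _ _ _ b1 b2
        obtain ⟨pj1, pj2⟩ := D_pair hm0 hk' hjm b3
        have hin : i % m + 1 < m := by omega
        refine ⟨nl+k', by omega, ?_, ?_, ?_⟩
        · rw [D_row_val hk' hm0, if_neg (by omega), D_succ_val hm0 hmodd hk' (by omega),
            if_neg (by omega), show min (i/m+1) (M-1) = i/m+1 by omega]
          exact b1.symm
        · rw [D_succ_val hm0 hmodd hk' (by omega), if_neg (by omega), pj1]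
          exact hbij
        · rw [pj1, pj2]

lemma step_last (hm0 : 0 < m) (hmodd : m % 2 = 1) (hModd : M % 2 = 1) (hm1 : m = 1 → M = 1)
    (h2 : 2 ≤ M * m) :
    ∃ k, k < nl + N + 2 ∧
      stepA M N m nl Bb g (M*m-2) k ≠ stepA M N m nl Bb g (M*m-1) k := by
  have hm3 : 3 ≤ m := by
    rcases Nat.lt_or_ge m 2 with h | h
    · exfalso
      have hm1' : m = 1 := by omega
      rw [hm1', hm1 hm1'] at h2
      omega
    · omega
  obtain ⟨M', rfl⟩ : ∃ M', M = M' + 1 := ⟨M-1, by omega⟩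
  have hmul : (M'+1)*m = m*M' + m := by ring
  obtain ⟨d01, d02⟩ := dm_of M' (m-2) hm0 (by omega)
  obtain ⟨d11, d12⟩ := dm_of M' (m-1) hm0 (by omega)
  refine ⟨nl+N+0, by omega, ?_⟩
  rw [show (M'+1)*m - 2 = m*M' + (m-2) by omega, show (M'+1)*m - 1 = m*M' + (m-1) by omega,
    E_val (show (0:ℕ) < 2 by norm_num), E_val (show (0:ℕ) < 2 by norm_num),
    d01, d02, d11, d12, show M' % 2 = 0 by omega, show (m-2) % 2 = 1 by omega,
    show (m-1) % 2 = 0 by omega]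
  simp

end Step

lemma main_ind {M N : ℕ} (hM : Odd M) (Bb : ℕ → ℕ → Bool)
    (H1 : ∀ s t, s < t → t < M → ∃ k, k < N ∧ Bb s k ≠ Bb (min (s+1) (M-1)) k ∧
          Bb (min (s+1) (M-1)) k = Bb t k ∧ Bb t k = Bb (min (t+1) (M-1)) k)
    (H2 : ∀ s t, s + 1 < t → t < M → ∃ k, k < N ∧ Bb s k ≠ Bb (min (s+1) (M-1)) k ∧
          Bb (min (s+1) (M-1)) k ≠ Bb t k ∧ Bb t k = Bb (min (t+1) (M-1)) k)
    (H0 : 2 ≤ M → ∃ k, k < N ∧ Bb (M-2) k ≠ Bb (M-1) k) :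
    ∀ ℓ : ℕ,
      (∀ i j, i < j → j < M^(ℓ+1) →
        SatConN (M^(ℓ+1)) ((ℓ+1)*N+2*ℓ) (blowup Bb M N (ℓ+1)) i j) ∧
      (2 ≤ M^(ℓ+1) → ∃ k, k < (ℓ+1)*N+2*ℓ ∧
        blowup Bb M N (ℓ+1) (M^(ℓ+1)-2) k ≠ blowup Bb M N (ℓ+1) (M^(ℓ+1)-1) k) := by
  have hM1 : 1 ≤ M := by
    rcases hM with ⟨r, hr⟩; omega
  intro ℓ
  induction ℓ with
  | zero =>
    have eM : M^(0+1) = M := by norm_num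
    have eN : (0+1)*N+2*0 = N := by ring
    constructor
    · intro i j hij hjm
      rw [eM] at hjm
      rw [eM, eN]
      exact H1 i j hij hjm
    · intro h2
      rw [eM] at h2
      rw [eM, eN]
      exact H0 h2
  | succ ℓ IH =>
    have hm0 : 0 < M^(ℓ+1) := Nat.pow_pos (by omega)
    have hmodd : M^(ℓ+1) % 2 = 1 := Nat.odd_iff.1 (hM.pow)
    have e1 : M^(ℓ+1+1) = M * M^(ℓ+1) := by ring
    have e2 : (ℓ+1+1)*N + 2*(ℓ+1) = ((ℓ+1)*N+2*ℓ) + N + 2 := by ring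
    constructor
    · intro i j hij hjm
      rw [e1] at hjm
      rw [e1, e2]
      exact step_pair hm0 hmodd H1 H2 IH.1 i j hij hjm
    · intro h2
      rw [e1] at h2
      rw [e1, e2]
      exact step_last hm0 hmodd (Nat.odd_iff.1 hM)
        (fun h => by
          have := Nat.le_self_pow (show ℓ+1 ≠ 0 by omega) M
          omega) h2

theorem stmt10 {M N : ℕ} (hM : Odd M) (Bb : ℕ → ℕ → Bool)
    (hSOR : StronglyOrderRegular (fun (i : Fin M) (k : Fin N) => Bb i.1 k.1)) :
    ∀ ℓ : ℕ, 1 ≤ ℓ →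
      OrderRegular (fun (i : Fin (M ^ ℓ)) (k : Fin (ℓ * N + 2 * (ℓ - 1))) =>
        blowup Bb M N ℓ i.1 k.1) := by
  obtain ⟨⟨hpair, hlast⟩, hc2⟩ := hSOR
  have H1 : ∀ s t, s < t → t < M → ∃ k, k < N ∧ Bb s k ≠ Bb (min (s+1) (M-1)) k ∧
      Bb (min (s+1) (M-1)) k = Bb t k ∧ Bb t k = Bb (min (t+1) (M-1)) k := by
    intro s t hst htM
    exact (satConN_iff Bb ⟨s, by omega⟩ ⟨t, htM⟩).1
      (hpair ⟨s, by omega⟩ ⟨t, htM⟩ (Fin.mk_lt_mk.mpr hst))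
  have H2 : ∀ s t, s + 1 < t → t < M → ∃ k, k < N ∧ Bb s k ≠ Bb (min (s+1) (M-1)) k ∧
      Bb (min (s+1) (M-1)) k ≠ Bb t k ∧ Bb t k = Bb (min (t+1) (M-1)) k := by
    intro s t hst htM
    obtain ⟨k, h1, h2, h3⟩ := hc2 ⟨s, by omega⟩ ⟨t, htM⟩ hst
    exact ⟨k.1, k.2, by simpa [rowSucc_val] using h1, by simpa [rowSucc_val] using h2,
      by simpa [rowSucc_val] using h3⟩
  have H0 : 2 ≤ M → ∃ k, k < N ∧ Bb (M-2) k ≠ Bb (M-1) k := by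
    intro h2
    have := hlast h2
    rw [Function.ne_iff] at this
    obtain ⟨k, hk⟩ := this
    exact ⟨k.1, k.2, hk⟩
  intro ℓ hℓ
  obtain ⟨ℓ', rfl⟩ : ∃ ℓ', ℓ = ℓ'+1 := ⟨ℓ-1, by omega⟩
  rw [orderRegular_iff]
  rw [show (ℓ'+1) * N + 2*(ℓ'+1-1) = (ℓ'+1)*N + 2*ℓ' by omega]
  exact main_ind hM Bb H1 H2 H0 ℓ'
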